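/- For every τ in the upper half-plane, θ[1;0]·θ[1;1/2]³ − θ[1;1/4]·θ[1;3/4]³ − θ[1;3/4]·θ[1;1/4]³ = 0, where all theta constants are evaluated at (0,τ). -/

import Mathlib

open Complex

/-- Theta function with characteristics `[ε; ε']` of Farkas and Kra. -/
noncomputable def thetaChar (ε ε' : ℝ) (ζ τ : ℂ) : ℂ :=
  ∑' n : ℤ, Complex.exp (2 * (Real.pi : ℂ) * I *
    ((1 / 2) * ((n : ℂ) + (ε : ℂ) / 2) ^ 2 * τ + ((n : ℂ) + (ε : ℂ) / 2) * (ζ + (ε' : ℂ) / 2)))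

namespace Stmt13Aux

noncomputable abbrev π' : ℂ := (Real.pi : ℂ)

/-- term of `f_s = ∑_{m odd} x^{m²} ζ₁₆^{s m}` -/
noncomputable def Ft (τ : ℂ) (s : ℤ) (n : ℤ) : ℂ :=
  cexp (π' * I * τ * (2 * n + 1) ^ 2 / 4 + π' * I * s * (2 * n + 1) / 8)

/-- term of even-index doubled theta -/
noncomputable def At (τ : ℂ) (r : ℤ) (j : ℤ) : ℂ :=
  cexp (π' * I * τ * (2 * j) ^ 2 / 2 + π' * I * r * (2 * j) / 8)

/-- term of odd-index doubled theta -/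
noncomputable def Bt (τ : ℂ) (r : ℤ) (k : ℤ) : ℂ :=
  cexp (π' * I * τ * (2 * k + 1) ^ 2 / 2 + π' * I * r * (2 * k + 1) / 8)

variable {τ : ℂ} (hτ : 0 < τ.im)

lemma Ft_eq (s : ℤ) (n : ℤ) :
    Ft τ s n = cexp (π' * I * τ / 4 + π' * I * s / 8) *
      jacobiTheta₂_term n (τ / 2 + (s : ℂ) / 8) τ := by
  unfold Ft jacobiTheta₂_term
  rw [← Complex.exp_add]
  congr 1
  ring

lemma At_eq (r : ℤ) (j : ℤ) :
    At τ r j = jacobiTheta₂_term j ((r : ℂ) / 8) (2 * τ) := by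
  unfold At jacobiTheta₂_term
  congr 1
  ring

lemma Bt_eq (r : ℤ) (k : ℤ) :
    Bt τ r k = cexp (π' * I * τ / 2 + π' * I * r / 8) *
      jacobiTheta₂_term k (τ + (r : ℂ) / 8) (2 * τ) := by
  unfold Bt jacobiTheta₂_term
  rw [← Complex.exp_add]
  congr 1
  ring

include hτ

lemma sumF (s : ℤ) : Summable fun n : ℤ => ‖Ft τ s n‖ := by
  simp only [Ft_eq]
  exact summable_norm_iff.mpr
    (((summable_jacobiTheta₂_term_iff _ τ).mpr hτ).mul_left _)

lemma sumA (r : ℤ) : Summable fun j : ℤ => ‖At τ r j‖ := by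
  simp only [At_eq]
  refine summable_norm_iff.mpr ((summable_jacobiTheta₂_term_iff _ (2 * τ)).mpr ?_)
  simpa using hτ

lemma sumB (r : ℤ) : Summable fun k : ℤ => ‖Bt τ r k‖ := by
  simp only [Bt_eq]
  refine summable_norm_iff.mpr (Summable.mul_left _
    ((summable_jacobiTheta₂_term_iff _ (2 * τ)).mpr ?_))
  simpa using hτ

omit hτ

/-- the parity-splitting equivalence `(Σ _ : Bool, ℤ × ℤ) ≃ ℤ × ℤ` -/
def pe : (Σ _ : Bool, ℤ × ℤ) ≃ ℤ × ℤ where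
  toFun x := match x with
    | ⟨false, (j, k)⟩ => (j + k, j - k - 1)
    | ⟨true, (j, k)⟩ => (j + k, j - k)
  invFun p := if (p.1 - p.2) % 2 = 0 then ⟨true, ((p.1 + p.2) / 2, (p.1 - p.2) / 2)⟩
    else ⟨false, ((p.1 + p.2 + 1) / 2, (p.1 - p.2 - 1) / 2)⟩
  left_inv := by
    rintro ⟨b, j, k⟩
    cases b
    · dsimp only
      rw [if_neg (by omega)]
      refine congrArg (Sigma.mk false) ?_
      simp only [Prod.mk.injEq]
      exact ⟨by omega, by omega⟩
    · dsimp only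
      rw [if_pos (by omega)]
      refine congrArg (Sigma.mk true) ?_
      simp only [Prod.mk.injEq]
      exact ⟨by omega, by omega⟩
  right_inv := by
    rintro ⟨a, b⟩
    by_cases h : (a - b) % 2 = 0
    · dsimp only
      rw [if_pos h]
      dsimp only
      simp only [Prod.mk.injEq]
      exact ⟨by omega, by omega⟩
    · dsimp only
      rw [if_neg h]
      dsimp only
      simp only [Prod.mk.injEq]
      exact ⟨by omega, by omega⟩

include hτ

set_option maxHeartbeats 1600000 in
lemma prod_eq (s s' : ℤ) :
    (∑' n : ℤ, Ft τ s n) * (∑' n : ℤ, Ft τ s' n)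
      = (∑' j : ℤ, At τ (s + s') j) * (∑' k : ℤ, Bt τ (s - s') k)
        + (∑' j : ℤ, Bt τ (s + s') j) * (∑' k : ℤ, At τ (s - s') k) := by
  rw [tsum_mul_tsum_of_summable_norm (sumF hτ s) (sumF hτ s'),
    tsum_mul_tsum_of_summable_norm (sumA hτ (s + s')) (sumB hτ (s - s')),
    tsum_mul_tsum_of_summable_norm (sumB hτ (s + s')) (sumA hτ (s - s'))]
  have hsum : Summable fun z : ℤ × ℤ => Ft τ s z.1 * Ft τ s' z.2 :=
    summable_mul_of_summable_norm (sumF hτ s) (sumF hτ s')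
  have h' : Summable fun x : Σ _ : Bool, ℤ × ℤ =>
      (fun z : ℤ × ℤ => Ft τ s z.1 * Ft τ s' z.2) (pe x) :=
    pe.summable_iff.mpr hsum
  calc ∑' z : ℤ × ℤ, Ft τ s z.1 * Ft τ s' z.2
      = ∑' x : Σ _ : Bool, ℤ × ℤ, (fun z : ℤ × ℤ => Ft τ s z.1 * Ft τ s' z.2) (pe x) :=
        (pe.tsum_eq _).symm
    _ = ∑' b : Bool, ∑' jk : ℤ × ℤ,
          (fun z : ℤ × ℤ => Ft τ s z.1 * Ft τ s' z.2) (pe ⟨b, jk⟩) := h'.tsum_sigma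
    _ = (∑' jk : ℤ × ℤ, (fun z : ℤ × ℤ => Ft τ s z.1 * Ft τ s' z.2) (pe ⟨false, jk⟩))
          + ∑' jk : ℤ × ℤ, (fun z : ℤ × ℤ => Ft τ s z.1 * Ft τ s' z.2) (pe ⟨true, jk⟩) :=
        tsum_bool _
    _ = (∑' z : ℤ × ℤ, At τ (s + s') z.1 * Bt τ (s - s') z.2)
          + ∑' z : ℤ × ℤ, Bt τ (s + s') z.1 * At τ (s - s') z.2 := by
        congr 1
        · refine tsum_congr fun jk => ?_
          obtain ⟨j, k⟩ := jk
          show Ft τ s (j + k) * Ft τ s' (j - k - 1) = At τ (s + s') j * Bt τ (s - s') k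
          unfold Ft At Bt
          rw [← Complex.exp_add, ← Complex.exp_add]
          congr 1
          push_cast
          ring
        · refine tsum_congr fun jk => ?_
          obtain ⟨j, k⟩ := jk
          show Ft τ s (j + k) * Ft τ s' (j - k) = Bt τ (s + s') j * At τ (s - s') k
          unfold Ft At Bt
          rw [← Complex.exp_add, ← Complex.exp_add]
          congr 1
          push_cast
          ring

omit hτ

lemma A_neg (r : ℤ) : (∑' j : ℤ, At τ (-r) j) = ∑' j : ℤ, At τ r j := by
  have h1 : (∑' j : ℤ, At τ (-r) j) = ∑' j : ℤ, At τ r (-j) :=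
    tsum_congr fun j => by unfold At; congr 1; push_cast; ring
  rw [h1, ← (Equiv.neg ℤ).tsum_eq (At τ r)]
  rfl

/-- the involution `k ↦ -k-1` -/
def nk : ℤ ≃ ℤ := Function.Involutive.toPerm (fun k => -k - 1) (fun k => by ring)

lemma B_neg (r : ℤ) : (∑' k : ℤ, Bt τ (-r) k) = ∑' k : ℤ, Bt τ r k := by
  have h1 : (∑' k : ℤ, Bt τ (-r) k) = ∑' k : ℤ, Bt τ r (-k - 1) :=
    tsum_congr fun k => by unfold Bt; congr 1; push_cast; ring
  rw [h1, ← nk.tsum_eq (Bt τ r)]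
  rfl

lemma exp_odd (k : ℤ) : cexp ((2 * (k : ℂ) + 1) * (π' * I)) = -1 := by
  rw [show (2 * (k : ℂ) + 1) * (π' * I) = (k : ℂ) * (2 * π' * I) + π' * I by ring,
    Complex.exp_add, Complex.exp_int_mul_two_pi_mul_I, Complex.exp_pi_mul_I, one_mul]

lemma B4 : (∑' k : ℤ, Bt τ 4 k) = 0 := by
  have h1 : (∑' k : ℤ, Bt τ 4 k) = ∑' k : ℤ, Bt τ 4 (-k - 1) := (nk.tsum_eq (Bt τ 4)).symm
  have h2 : ∀ k : ℤ, Bt τ 4 (-k - 1) = -Bt τ 4 k := by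
    intro k
    unfold Bt
    rw [show π' * I * τ * (2 * ((-k - 1 : ℤ) : ℂ) + 1) ^ 2 / 2
          + π' * I * ((4 : ℤ) : ℂ) * (2 * ((-k - 1 : ℤ) : ℂ) + 1) / 8
        = (π' * I * τ * (2 * (k : ℂ) + 1) ^ 2 / 2
          + π' * I * ((4 : ℤ) : ℂ) * (2 * (k : ℂ) + 1) / 8)
          + (2 * ((-k - 1 : ℤ) : ℂ) + 1) * (π' * I) by push_cast; ring,
      Complex.exp_add, exp_odd (-k - 1), mul_neg_one]
  have h3 : (∑' k : ℤ, Bt τ 4 k) = -∑' k : ℤ, Bt τ 4 k := by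
    nth_rewrite 1 [h1]
    rw [tsum_congr h2, tsum_neg]
  have := eq_neg_iff_add_eq_zero.mp h3
  linear_combination this / 2

lemma B6 : (∑' k : ℤ, Bt τ 6 k) = -∑' k : ℤ, Bt τ 2 k := by
  have h2 : ∀ k : ℤ, Bt τ 6 k = -Bt τ (-2) k := by
    intro k
    unfold Bt
    rw [show π' * I * τ * (2 * (k : ℂ) + 1) ^ 2 / 2
          + π' * I * ((6 : ℤ) : ℂ) * (2 * (k : ℂ) + 1) / 8
        = (π' * I * τ * (2 * (k : ℂ) + 1) ^ 2 / 2
          + π' * I * ((-2 : ℤ) : ℂ) * (2 * (k : ℂ) + 1) / 8)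
          + (2 * (k : ℂ) + 1) * (π' * I) by push_cast; ring,
      Complex.exp_add, exp_odd k, mul_neg_one]
  rw [tsum_congr h2, tsum_neg, B_neg]

lemma A6 : (∑' j : ℤ, At τ 6 j) = ∑' j : ℤ, At τ 2 j := by
  have h2 : ∀ j : ℤ, At τ 6 j = At τ (-2) j := by
    intro j
    unfold At
    rw [show π' * I * τ * (2 * (j : ℂ)) ^ 2 / 2
          + π' * I * ((6 : ℤ) : ℂ) * (2 * (j : ℂ)) / 8
        = (π' * I * τ * (2 * (j : ℂ)) ^ 2 / 2
          + π' * I * ((-2 : ℤ) : ℂ) * (2 * (j : ℂ)) / 8)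
          + (j : ℂ) * (2 * π' * I) by push_cast; ring,
      Complex.exp_add, Complex.exp_int_mul_two_pi_mul_I, mul_one]
  rw [tsum_congr h2, A_neg]

lemma theta_eq (ε' : ℝ) (s : ℤ) (h : (s : ℝ) = 4 * ε') :
    thetaChar 1 ε' 0 τ = ∑' n : ℤ, Ft τ s n := by
  unfold thetaChar Ft
  refine tsum_congr fun n => ?_
  congr 1
  have hc : (s : ℂ) = 4 * (ε' : ℂ) := by exact_mod_cast congrArg (fun x : ℝ => (x : ℂ)) h
  rw [hc]
  push_cast
  ring

end Stmt13Aux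

open Stmt13Aux in
theorem stmt_13 (τ : ℂ) (hτ : 0 < τ.im) :
    thetaChar 1 0 0 τ * thetaChar 1 (1/2) 0 τ ^ 3
      - thetaChar 1 (1/4) 0 τ * thetaChar 1 (3/4) 0 τ ^ 3
      - thetaChar 1 (3/4) 0 τ * thetaChar 1 (1/4) 0 τ ^ 3 = 0 := by
  rw [theta_eq 0 0 (by norm_num), theta_eq (1/2) 2 (by norm_num),
    theta_eq (1/4) 1 (by norm_num), theta_eq (3/4) 3 (by norm_num)]
  set T0 := ∑' n : ℤ, Ft τ 0 n
  set T1 := ∑' n : ℤ, Ft τ 1 n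
  set T2 := ∑' n : ℤ, Ft τ 2 n
  set T3 := ∑' n : ℤ, Ft τ 3 n
  have h02 : T0 * T2 = (∑' j : ℤ, At τ 2 j) * (∑' k : ℤ, Bt τ 2 k)
      + (∑' j : ℤ, Bt τ 2 j) * (∑' k : ℤ, At τ 2 k) := by
    have := prod_eq hτ 0 2
    norm_num at this
    rw [this, A_neg 2, B_neg 2]
  have h22 : T2 * T2 = (∑' j : ℤ, At τ 4 j) * (∑' k : ℤ, Bt τ 0 k) := by
    have := prod_eq hτ 2 2
    norm_num at this
    rw [this, B4, zero_mul, add_zero]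
  have h13 : T1 * T3 = (∑' j : ℤ, At τ 4 j) * (∑' k : ℤ, Bt τ 2 k) := by
    have := prod_eq hτ 1 3
    norm_num at this
    rw [this, B4, zero_mul, add_zero, B_neg 2]
  have h11 : T1 * T1 = (∑' j : ℤ, At τ 2 j) * (∑' k : ℤ, Bt τ 0 k)
      + (∑' j : ℤ, Bt τ 2 j) * (∑' k : ℤ, At τ 0 k) := by
    have := prod_eq hτ 1 1
    norm_num at this
    rw [this]
  have h33 : T3 * T3 = (∑' j : ℤ, At τ 2 j) * (∑' k : ℤ, Bt τ 0 k)
      - (∑' j : ℤ, Bt τ 2 j) * (∑' k : ℤ, At τ 0 k) := by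
    have := prod_eq hτ 3 3
    norm_num at this
    rw [this, A6, B6, neg_mul, ← sub_eq_add_neg]
  have key : T0 * T2 ^ 3 - T1 * T3 ^ 3 - T3 * T1 ^ 3
      = (T0 * T2) * (T2 * T2) - (T1 * T3) * ((T3 * T3) + (T1 * T1)) := by ring
  rw [key, h02, h22, h13, h11, h33]
  ring
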